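/- If G is a finite simple graph of order n(G) and t ≥ 2 is an integer, then ι(S_G^t) ≥ ι(S_G² | Ex(S_G²))·n(G)^{t−2}, where ι(S_G² | Ex(S_G²)) is the minimum cardinality of a set A ⊆ V(S_G²) such that every edge of S_G² has an endpoint in N[A] ∪ Ex(S_G²), Ex(S_G²) being the set of extreme vertices of S_G². -/

import Mathlib

/-- The closed neighborhood `N[A]` of a set of vertices. -/
def closedNbhd {V : Type*} (G : SimpleGraph V) (A : Set V) : Set V :=
  {v | v ∈ A ∨ ∃ a ∈ A, G.Adj a v}

/-- A set of vertices is independent if it contains no edge. -/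
def IndepSet {V : Type*} (G : SimpleGraph V) (S : Set V) : Prop :=
  ∀ u ∈ S, ∀ v ∈ S, ¬ G.Adj u v

/-- `A` is isolating if the vertices outside `N[A]` form an independent set. -/
def IsIsolating {V : Type*} (G : SimpleGraph V) (A : Set V) : Prop :=
  IndepSet G (closedNbhd G A)ᶜ

/-- The isolation number `ι(G)`. -/
noncomputable def isolationNum {V : Type*} (G : SimpleGraph V) : ℕ :=
  sInf {n | ∃ A : Set V, IsIsolating G A ∧ A.ncard = n}

/-- `D` is a dominating set if `N[D] = V(G)`. -/
def IsDominating {V : Type*} (G : SimpleGraph V) (D : Set V) : Prop :=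
  closedNbhd G D = Set.univ

/-- The domination number `γ(G)`. -/
noncomputable def dominationNum {V : Type*} (G : SimpleGraph V) : ℕ :=
  sInf {n | ∃ D : Set V, IsDominating G D ∧ D.ncard = n}
/-- The generalized Sierpiński graph `S_G^t` on words of length `t` over `V(G)`. -/
def sierpinskiGraph {V : Type*} (G : SimpleGraph V) (t : ℕ) : SimpleGraph (Fin t → V) where
  Adj u v := ∃ i : Fin t, (∀ j, j < i → u j = v j) ∧ u i ≠ v i ∧ G.Adj (u i) (v i) ∧
      ∀ j, i < j → u j = v i ∧ v j = u i
  symm := by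
    constructor
    rintro u v ⟨i, h1, h2, h3, h4⟩
    exact ⟨i, fun j hj => (h1 j hj).symm, h2.symm, h3.symm,
      fun j hj => ⟨(h4 j hj).2, (h4 j hj).1⟩⟩
  loopless := by
    constructor
    rintro u ⟨i, -, h2, -, -⟩
    exact h2 rfl

/-- The extreme vertices of `S_G^t`: the constant words. -/
def extremeVertices (V : Type*) (t : ℕ) : Set (Fin t → V) :=
  {w | ∃ x : V, w = fun _ => x}
/-- `ι(G|X)`: the minimum size of a set `A` such that the vertices outside
`N[A] ∪ X` form an independent set (vertices of `X` counting as already dominated). -/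
noncomputable def isolationNumRel {V : Type*} (G : SimpleGraph V) (X : Set V) : ℕ :=
  sInf {n | ∃ A : Set V, IndepSet G (closedNbhd G A ∪ X)ᶜ ∧ A.ncard = n}

section Aux
variable {V : Type*}

def catW (m : ℕ) (w : Fin m → V) (u : Fin 2 → V) : Fin (m + 2) → V :=
  fun i => if h : (i : ℕ) < m then w ⟨i, h⟩
    else u ⟨(i : ℕ) - m, by have := i.isLt; omega⟩

lemma catW_lt {m : ℕ} (w : Fin m → V) (u : Fin 2 → V) (i : Fin (m + 2)) (h : (i : ℕ) < m) :
    catW m w u i = w ⟨i, h⟩ := dif_pos h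

lemma catW_ge {m : ℕ} (w : Fin m → V) (u : Fin 2 → V) (i : Fin (m + 2)) (h : ¬ (i : ℕ) < m) :
    catW m w u i = u ⟨(i : ℕ) - m, by have := i.isLt; omega⟩ := dif_neg h

lemma catW_apply_add {m : ℕ} (w : Fin m → V) (u : Fin 2 → V) (k : Fin 2)
    (h : m + (k : ℕ) < m + 2) : catW m w u ⟨m + (k : ℕ), h⟩ = u k := by
  rw [catW_ge _ _ _ (by simp)]
  congr 1
  apply Fin.ext
  simp

lemma adj_catW_iff (G : SimpleGraph V) (m : ℕ) (w : Fin m → V) (a b : Fin 2 → V) :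
    (sierpinskiGraph G (m + 2)).Adj (catW m w a) (catW m w b) ↔
      (sierpinskiGraph G 2).Adj a b := by
  constructor
  · rintro ⟨i, h1, h2, h3, h4⟩
    have hilt := i.isLt
    have him : m ≤ (i : ℕ) := by
      by_contra hlt
      push_neg at hlt
      exact h2 (by rw [catW_lt w a i hlt, catW_lt w b i hlt])
    have hia : catW m w a i = a ⟨(i : ℕ) - m, by omega⟩ := catW_ge _ _ _ (by omega)
    have hib : catW m w b i = b ⟨(i : ℕ) - m, by omega⟩ := catW_ge _ _ _ (by omega)
    refine ⟨⟨(i : ℕ) - m, by omega⟩, ?_, ?_, ?_, ?_⟩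
    · intro j hj
      have hjlt := j.isLt
      rw [Fin.lt_def] at hj
      simp only at hj
      have := h1 ⟨m + (j : ℕ), by omega⟩ (by rw [Fin.lt_def]; simp; omega)
      rwa [catW_apply_add, catW_apply_add] at this
    · rw [hia, hib] at h2; exact h2
    · rw [hia, hib] at h3; exact h3
    · intro j hj
      have hjlt := j.isLt
      rw [Fin.lt_def] at hj
      simp only at hj
      have := h4 ⟨m + (j : ℕ), by omega⟩ (by rw [Fin.lt_def]; simp; omega)
      rwa [catW_apply_add, catW_apply_add, hia, hib] at this
  · rintro ⟨i, h1, h2, h3, h4⟩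
    have hilt := i.isLt
    refine ⟨⟨m + (i : ℕ), by omega⟩, ?_, ?_, ?_, ?_⟩
    · intro j hj
      have hjlt := j.isLt
      rw [Fin.lt_def] at hj
      simp only at hj
      by_cases hjm : (j : ℕ) < m
      · rw [catW_lt _ _ _ hjm, catW_lt _ _ _ hjm]
      · rw [catW_ge _ _ _ hjm, catW_ge _ _ _ hjm]
        exact h1 ⟨(j : ℕ) - m, by omega⟩ (by rw [Fin.lt_def]; simp; omega)
    · rw [catW_apply_add, catW_apply_add]; exact h2
    · rw [catW_apply_add, catW_apply_add]; exact h3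
    · intro j hj
      have hjlt := j.isLt
      rw [Fin.lt_def] at hj
      simp only at hj
      have hjm : ¬ (j : ℕ) < m := by omega
      rw [catW_ge _ _ _ hjm, catW_ge _ _ _ hjm, catW_apply_add, catW_apply_add]
      exact h4 ⟨(j : ℕ) - m, by omega⟩ (by rw [Fin.lt_def]; simp; omega)

lemma suffix_const_of_adj (G : SimpleGraph V) (m : ℕ) {u v : Fin (m + 2) → V}
    (h : (sierpinskiGraph G (m + 2)).Adj u v) {j0 : Fin (m + 2)} (hj0 : (j0 : ℕ) < m)
    (hne : u j0 ≠ v j0) :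
    u ⟨m, by omega⟩ = u ⟨m + 1, by omega⟩ := by
  obtain ⟨i, h1, h2, h3, h4⟩ := h
  have hij : (i : ℕ) ≤ (j0 : ℕ) := by
    by_contra hc
    push_neg at hc
    exact hne (h1 j0 (by rw [Fin.lt_def]; exact hc))
  have e1 := h4 ⟨m, by omega⟩ (by rw [Fin.lt_def]; simp; omega)
  have e2 := h4 ⟨m + 1, by omega⟩ (by rw [Fin.lt_def]; simp; omega)
  rw [e1.1, e2.1]

lemma const2_mem {a : Fin 2 → V} (h : a 0 = a 1) : a ∈ extremeVertices V 2 := by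
  refine ⟨a 0, ?_⟩
  funext i
  fin_cases i
  · rfl
  · exact h.symm

lemma adj_catW_cases (G : SimpleGraph V) (m : ℕ) (w : Fin m → V) (a : Fin 2 → V)
    (x : Fin (m + 2) → V) (h : (sierpinskiGraph G (m + 2)).Adj (catW m w a) x) :
    a 0 = a 1 ∨ ∃ b : Fin 2 → V, x = catW m w b := by
  by_cases hp : ∀ j : Fin (m + 2), ∀ hj : (j : ℕ) < m, x j = w ⟨j, hj⟩
  · right
    refine ⟨fun k => x ⟨m + (k : ℕ), by have := k.isLt; omega⟩, ?_⟩
    funext i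
    have hilt := i.isLt
    by_cases hi : (i : ℕ) < m
    · rw [catW_lt _ _ _ hi]; exact hp i hi
    · rw [catW_ge _ _ _ hi]
      simp only
      congr 1
      apply Fin.ext
      simp
      omega
  · push_neg at hp
    obtain ⟨j0, hj0, hne⟩ := hp
    left
    have hne' : catW m w a j0 ≠ x j0 := by
      rw [catW_lt _ _ _ hj0]; exact fun e => hne e.symm
    have hc := suffix_const_of_adj G m h hj0 hne'
    have e0 : catW m w a ⟨m, by omega⟩ = a 0 := by
      rw [catW_ge _ _ _ (by simp)]
      congr 1
      apply Fin.ext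
      simp
    have e1 : catW m w a ⟨m + 1, by omega⟩ = a 1 := by
      rw [catW_ge _ _ _ (by simp)]
      congr 1
      apply Fin.ext
      simp
    rwa [e0, e1] at hc

end Aux

/-- For `t ≥ 2`, `ι(S_G^t) ≥ ι(S_G² | Ex(S_G²)) · n(G)^{t−2}`. -/
theorem isolation_sierpinski_ge
    {V : Type*} [Fintype V] (G : SimpleGraph V) (t : ℕ) (ht : 2 ≤ t) :
    isolationNum (sierpinskiGraph G t) ≥
      isolationNumRel (sierpinskiGraph G 2) (extremeVertices V 2) *
        Fintype.card V ^ (t - 2) := by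
  classical
  obtain ⟨m, rfl⟩ : ∃ m, t = m + 2 := ⟨t - 2, by omega⟩
  simp only [Nat.add_sub_cancel]
  set c := isolationNumRel (sierpinskiGraph G 2) (extremeVertices V 2) with hc
  -- every isolating set has size at least c * card^m
  have key : ∀ A : Set (Fin (m + 2) → V), IsIsolating (sierpinskiGraph G (m + 2)) A →
      c * Fintype.card V ^ m ≤ A.ncard := by
    intro A hA
    set B : (Fin m → V) → Set (Fin 2 → V) := fun w => {u | catW m w u ∈ A} with hBdef
    have hBlow : ∀ w, c ≤ (B w).ncard := by
      intro w
      apply Nat.sInf_le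
      refine ⟨B w, ?_, rfl⟩
      intro a ha b hb hab
      have hdom : ∀ u : Fin 2 → V,
          u ∈ (closedNbhd (sierpinskiGraph G 2) (B w) ∪ extremeVertices V 2)ᶜ →
          catW m w u ∉ closedNbhd (sierpinskiGraph G (m + 2)) A := by
        intro u hu hcu
        rcases hcu with hmem | ⟨x, hx, hadj⟩
        · exact hu (Or.inl (Or.inl hmem))
        · rcases adj_catW_cases G m w u x hadj.symm with heq | ⟨b', rfl⟩
          · exact hu (Or.inr (const2_mem heq))
          · exact hu (Or.inl (Or.inr ⟨b', hx, (adj_catW_iff G m w b' u).1 hadj⟩))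
      exact hA _ (hdom a ha) _ (hdom b hb) ((adj_catW_iff G m w a b).2 hab)
    have hAfin : A.Finite := Set.toFinite A
    set F := hAfin.toFinset with hF
    set f : (Fin (m + 2) → V) → (Fin m → V) :=
      fun x j => x ⟨(j : ℕ), by have := j.isLt; omega⟩ with hf
    have hcards : F.card = ∑ w : Fin m → V, (F.filter fun x => f x = w).card :=
      Finset.card_eq_sum_card_fiberwise (fun x _ => Finset.mem_univ _)
    have hfiber : ∀ w, (B w).ncard ≤ (F.filter fun x => f x = w).card := by
      intro w
      have hBfin : (B w).Finite := Set.toFinite _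
      rw [Set.ncard_eq_toFinset_card _ hBfin]
      apply Finset.card_le_card_of_injOn (fun u => catW m w u)
      · intro u hu
        rw [Finset.mem_coe, Set.Finite.mem_toFinset] at hu
        rw [Finset.mem_coe, Finset.mem_filter]
        constructor
        · rw [hF, Set.Finite.mem_toFinset]; exact hu
        · funext j
          have hjlt := j.isLt
          show catW m w u ⟨(j : ℕ), _⟩ = w j
          rw [catW_lt _ _ _ hjlt]
      · intro u1 _ u2 _ he
        funext k
        have hklt := k.isLt
        have := congrFun he ⟨m + (k : ℕ), by omega⟩
        simp only at this
        rwa [catW_apply_add, catW_apply_add] at this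
    have hsum : c * Fintype.card V ^ m ≤ F.card := by
      rw [hcards]
      have : ∀ w : Fin m → V, c ≤ (F.filter fun x => f x = w).card :=
        fun w => le_trans (hBlow w) (hfiber w)
      calc c * Fintype.card V ^ m = ∑ _w : Fin m → V, c := by
            rw [Finset.sum_const, smul_eq_mul, Finset.card_univ, Fintype.card_fun,
              Fintype.card_fin, mul_comm]
        _ ≤ _ := Finset.sum_le_sum fun w _ => this w
    rwa [Set.ncard_eq_toFinset_card _ hAfin]
  have hne : {n | ∃ A : Set (Fin (m + 2) → V),
      IsIsolating (sierpinskiGraph G (m + 2)) A ∧ A.ncard = n}.Nonempty := by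
    refine ⟨(Set.univ : Set (Fin (m + 2) → V)).ncard, Set.univ, ?_, rfl⟩
    intro u hu
    exact absurd (Or.inl (Set.mem_univ u)) hu
  show c * Fintype.card V ^ m ≤ isolationNum (sierpinskiGraph G (m + 2))
  unfold isolationNum
  obtain ⟨A, hA, hAcard⟩ := Nat.sInf_mem hne
  rw [← hAcard]
  exact key A hA
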